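/- For every natural number n ≥ 2 and every natural number i with 1 ≤ i ≤ fib(n), the integer fib(n+1) + i lies in the range of f on positive integers if and only if i does; that is, (∃ x ≥ 1, fib(n+1) + i = ⌊φ·x⌋) ↔ (∃ x ≥ 1, i = ⌊φ·x⌋). -/

import Mathlib

noncomputable def phi : ℝ := (1 + Real.sqrt 5) / 2

noncomputable def f (n : ℕ) : ℕ := ⌊phi * n⌋₊

lemma sqrt5_sq : Real.sqrt 5 ^ 2 = 5 := Real.sq_sqrt (by norm_num)
lemma sqrt5_lb : (2.23:ℝ) < Real.sqrt 5 := by nlinarith [sqrt5_sq, Real.sqrt_nonneg 5]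
lemma sqrt5_ub : Real.sqrt 5 < 2.24 := by nlinarith [sqrt5_sq, Real.sqrt_nonneg 5]
lemma phi_lb : (1.61:ℝ) < phi := by unfold phi; nlinarith [sqrt5_lb]
lemma phi_ub : phi < 1.62 := by unfold phi; nlinarith [sqrt5_ub]
lemma phi_sq : phi ^ 2 = phi + 1 := by unfold phi; nlinarith [sqrt5_sq]
lemma irr_phi : Irrational phi := Real.goldenRatio_irrational

lemma fib_phi : ∀ m : ℕ, (Nat.fib m : ℝ) * phi + (1 - phi) ^ m = Nat.fib (m + 1) := by
  intro m
  induction m using Nat.twoStepInduction with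
  | zero => simp
  | one => simp [Nat.fib]
  | more m ih1 ih2 =>
    have hrec : (Nat.fib (m+2) : ℝ) = Nat.fib m + Nat.fib (m+1) := by
      rw [Nat.fib_add_two]; push_cast; ring
    have hrec2 : (Nat.fib (m+3) : ℝ) = Nat.fib (m+1) + Nat.fib (m+2) := by
      rw [show m+3 = (m+1)+2 by ring, Nat.fib_add_two]; push_cast; ring
    have hp : (1 - phi)^(m+2) = (1-phi)^m * (2 - phi) := by
      rw [show m+2 = m+2 from rfl, pow_add]
      have : (1-phi)^2 = 2 - phi := by nlinarith [phi_sq]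
      rw [this]
    rw [show m+2+1 = m+3 from rfl, hrec2, hrec, hp]
    have hp1 : (1-phi)^(m+1) = (1-phi)^m * (1-phi) := pow_succ _ _
    linear_combination ih1 + ih2 + hp1 + hrec

lemma pow_phi_le {a b : ℕ} (h : a ≤ b) : (phi-1)^b ≤ (phi-1)^a :=
  pow_le_pow_of_le_one (by linarith [phi_lb]) (by linarith [phi_ub]) h

lemma pow_phi_pos (a : ℕ) : 0 < (phi-1)^a := pow_pos (by linarith [phi_lb]) a

lemma abs_psi_pow (m : ℕ) : |(1-phi)^m| = (phi-1)^m := by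
  rw [abs_pow, abs_of_nonpos (by linarith [phi_lb] : (1-phi) ≤ 0)]
  ring_nf

lemma phi_sq' : (phi-1)^2 = 2 - phi := by nlinarith [phi_sq]

lemma keyA : ∀ n : ℕ, 2 ≤ n → ∀ q : ℕ, 1 ≤ q → q < Nat.fib (n+1) →
    ∀ p : ℤ, (phi-1)^n ≤ |(q:ℝ) * phi - p| := by
  intro n
  induction n using Nat.strong_induction_on with
  | _ n ih =>
    intro hn q hq1 hq2 p
    rcases Nat.lt_or_ge n 4 with h4 | h4
    · have f3 : Nat.fib 3 = 2 := by decide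
      have f4 : Nat.fib 4 = 3 := by decide
      interval_cases n
      · -- n = 2, q = 1
        have e : Nat.fib (2+1) = 2 := by decide
        have hq : q = 1 := by omega
        subst hq
        rcases le_or_gt p 1 with hp | hp
        · have hp' : (p:ℝ) ≤ 1 := by exact_mod_cast hp
          refine le_abs.mpr (Or.inl ?_)
          push_cast; nlinarith [phi_lb, phi_sq']
        · have hp' : (2:ℝ) ≤ p := by exact_mod_cast hp
          refine le_abs.mpr (Or.inr ?_)
          push_cast; nlinarith [phi_lb, phi_sq']
      · -- n = 3, q ∈ {1, 2}
        have hc : (phi-1)^3 = 2*phi - 3 := by nlinarith [phi_sq]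
        have e : Nat.fib (3+1) = 3 := by decide
        have hq : q = 1 ∨ q = 2 := by omega
        rcases hq with rfl | rfl
        · rcases le_or_gt p 1 with hp | hp
          · have hp' : (p:ℝ) ≤ 1 := by exact_mod_cast hp
            refine le_abs.mpr (Or.inl ?_)
            push_cast; nlinarith [phi_lb, phi_ub, hc]
          · have hp' : (2:ℝ) ≤ p := by exact_mod_cast hp
            refine le_abs.mpr (Or.inr ?_)
            push_cast; nlinarith [phi_lb, phi_ub, hc]
        · rcases le_or_gt p 3 with hp | hp
          · have hp' : (p:ℝ) ≤ 3 := by exact_mod_cast hp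
            refine le_abs.mpr (Or.inl ?_)
            push_cast; nlinarith [phi_lb, phi_ub, hc]
          · have hp' : (4:ℝ) ≤ p := by exact_mod_cast hp
            refine le_abs.mpr (Or.inr ?_)
            push_cast; nlinarith [phi_lb, phi_ub, hc]
    · -- n ≥ 4
      obtain ⟨k, rfl⟩ : ∃ k, n = k + 4 := ⟨n - 4, by omega⟩
      have hfib5 : Nat.fib (k+5) = Nat.fib (k+3) + Nat.fib (k+4) := by
        rw [show k+5 = (k+3)+2 by ring, Nat.fib_add_two]
      rcases Nat.lt_trichotomy q (Nat.fib (k+4)) with hlt | heq | hgt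
      · have h := ih (k+3) (by omega) (by omega) q hq1 hlt p
        calc (phi-1)^(k+4) ≤ (phi-1)^(k+3) := pow_phi_le (by omega)
          _ ≤ _ := h
      · -- q = fib (k+4)
        subst heq
        have hid := fib_phi (k+4)
        have h5 : ((Nat.fib (k+4+1)) : ℝ) = (Nat.fib (k+5) : ℝ) := by norm_num
        have hq : ((Nat.fib (k+4) : ℕ):ℝ) * phi - p = ((Nat.fib (k+5) : ℝ) - p) - (1-phi)^(k+4) := by
          linear_combination hid + h5
        rw [hq]
        rcases eq_or_ne ((Nat.fib (k+5) : ℤ) - p) 0 with hd | hd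
        · have hd' : (Nat.fib (k+5) : ℝ) - p = 0 := by exact_mod_cast hd
          rw [hd', zero_sub, abs_neg, abs_psi_pow]
        · have hd1 : (1:ℝ) ≤ |(Nat.fib (k+5) : ℝ) - p| := by
            have := Int.one_le_abs hd
            calc (1:ℝ) ≤ |((Nat.fib (k+5) : ℤ) - p : ℤ)| := by exact_mod_cast this
              _ = |(Nat.fib (k+5) : ℝ) - p| := by push_cast; ring_nf
          have htri : |((Nat.fib (k+5):ℝ) - p) - (1-phi)^(k+4)|
              ≥ |(Nat.fib (k+5):ℝ) - p| - |(1-phi)^(k+4)| := abs_sub_abs_le_abs_sub _ _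
          rw [abs_psi_pow] at htri
          have h2 : (phi-1)^(k+4) ≤ (phi-1)^2 := pow_phi_le (by omega)
          have h5 : (phi-1)^(k+4) ≤ phi - 1 := (pow_phi_le (by omega)).trans_eq (pow_one _)
          linarith [htri, h2, phi_sq', phi_lb, hd1]
      · -- fib (k+4) < q < fib (k+5)
        set q' := q - Nat.fib (k+4) with hq'def
        have hq'1 : 1 ≤ q' := by omega
        have hq2' : q < Nat.fib (k+5) := hq2
        have hq'2 : q' < Nat.fib (k+3) := by omega
        have hcast : ((q':ℕ):ℝ) = (q:ℝ) - (Nat.fib (k+4):ℝ) := by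
          rw [hq'def]; push_cast [Nat.cast_sub (le_of_lt hgt)]; ring
        have h := ih (k+2) (by omega) (by omega) q' hq'1 hq'2 (p - (Nat.fib (k+5) : ℤ))
        have hid := fib_phi (k+4)
        have hsplit : (q:ℝ) * phi - p
            = ((q':ℝ) * phi - ((p - (Nat.fib (k+5):ℤ) : ℤ) : ℝ)) - (1-phi)^(k+4) := by
          have h5 : ((Nat.fib (k+4+1)) : ℝ) = (Nat.fib (k+5) : ℝ) := by norm_num
          push_cast
          rw [hcast]
          linear_combination hid + h5
        have htri : |(q:ℝ) * phi - p|
            ≥ |(q':ℝ) * phi - ((p - (Nat.fib (k+5):ℤ) : ℤ) : ℝ)| - (phi-1)^(k+4) := by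
          rw [hsplit]
          calc |((q':ℝ) * phi - _) - (1-phi)^(k+4)|
              ≥ |(q':ℝ) * phi - ((p - (Nat.fib (k+5):ℤ) : ℤ) : ℝ)| - |(1-phi)^(k+4)| :=
                abs_sub_abs_le_abs_sub _ _
            _ = _ := by rw [abs_psi_pow]
        have hpow : (phi-1)^(k+4) = (phi-1)^(k+2) * (2-phi) := by
          rw [show k+4 = (k+2)+2 by ring, pow_add, phi_sq']
        have hfin : 2 * (phi-1)^(k+4) ≤ (phi-1)^(k+2) := by
          rw [hpow]
          nlinarith [pow_phi_pos (k+2), phi_lb]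
        linarith [htri, h, hfin]

lemma mphi_ne_int (m : ℕ) (hm : 1 ≤ m) (p : ℤ) : (m:ℝ) * phi ≠ p :=
  (irr_phi.natCast_mul (by omega)).ne_int p

lemma rangeB (m : ℕ) (hm : 1 ≤ m) :
    (∃ x : ℕ, 1 ≤ x ∧ m = f x) ↔ 2 - phi < Int.fract ((m:ℝ) * phi) := by
  constructor
  · rintro ⟨x, hx1, hx2⟩
    have hx0 : (0:ℝ) ≤ phi * x := mul_nonneg (by linarith [phi_lb]) (Nat.cast_nonneg _)
    have h1 : (m:ℝ) ≤ phi * x := by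
      rw [hx2]; exact Nat.floor_le hx0
    have h2 : phi * x < (m:ℝ) + 1 := by
      rw [hx2]; push_cast; exact_mod_cast Nat.lt_floor_add_one (phi * x)
    -- 0 ≤ x - mφ + m < φ - 1
    have k1 : (0:ℝ) ≤ (x:ℝ) - m * phi + m := by nlinarith [phi_sq, phi_lb]
    have k2 : (x:ℝ) - m * phi + m < phi - 1 := by nlinarith [phi_sq, phi_lb]
    have k1' : (0:ℝ) < (x:ℝ) - m * phi + m := by
      rcases k1.lt_or_eq with h | h
      · exact h
      · exact absurd (by push_cast; linarith : (m:ℝ) * phi = ((x:ℤ) + (m:ℤ) : ℤ)) (by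
          exact_mod_cast mphi_ne_int m hm ((x:ℤ) + m))
    have hfr : Int.fract ((m:ℝ) * phi) = (m:ℝ) * phi - ((x:ℤ) + m - 1 : ℤ) := by
      rw [Int.fract_eq_iff]
      refine ⟨by push_cast; linarith [phi_ub], by push_cast; linarith [phi_lb], ⟨(x:ℤ) + m - 1, by ring⟩⟩
    rw [hfr]
    push_cast
    linarith [phi_lb]
  · intro hf
    have hm' : (m:ℝ) ≤ (m:ℝ) * phi := by nlinarith [phi_lb, (by exact_mod_cast hm : (1:ℝ) ≤ (m:ℝ))]
    have hfl : (m:ℤ) ≤ ⌊(m:ℝ) * phi⌋ := Int.le_floor.mpr (by exact_mod_cast hm')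
    obtain ⟨x, hxz⟩ : ∃ x : ℕ, ((x:ℕ):ℤ) = ⌊(m:ℝ) * phi⌋ + 1 - m :=
      ⟨(⌊(m:ℝ) * phi⌋ + 1 - m).toNat, Int.toNat_of_nonneg (by omega)⟩
    have hxr : ((x:ℕ):ℝ) = (⌊(m:ℝ) * phi⌋ : ℝ) + 1 - m := by
      exact_mod_cast congrArg (fun z : ℤ => (z:ℝ)) hxz
    have hfr := Int.floor_add_fract ((m:ℝ) * phi)
    have hfr1 : Int.fract ((m:ℝ) * phi) < 1 := Int.fract_lt_one _
    have hx1 : 1 ≤ x := by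
      have : (1:ℤ) ≤ (x:ℤ) := by omega
      exact_mod_cast this
    refine ⟨x, hx1, ?_⟩
    have h1 : (m:ℝ) ≤ phi * x := by
      rw [hxr]; nlinarith [phi_sq, phi_lb]
    have h2 : phi * x < (m:ℝ) + 1 := by
      rw [hxr]; nlinarith [phi_sq, phi_lb]
    have : ⌊phi * (x:ℝ)⌋₊ = m := by
      rw [Nat.floor_eq_iff (mul_nonneg (by linarith [phi_lb]) (Nat.cast_nonneg _))]
      exact ⟨h1, h2⟩
    exact this.symm

lemma shiftD (n i : ℕ) (hn : 2 ≤ n) (hi1 : 1 ≤ i) (hi2 : i ≤ Nat.fib n)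
    (hlt : i + 1 < Nat.fib (n+1)) :
    2 - phi < Int.fract (((Nat.fib (n+1) + i : ℕ):ℝ) * phi) ↔
      2 - phi < Int.fract ((i:ℝ) * phi) := by
  have hifib : i < Nat.fib (n+1) := lt_of_le_of_lt hi2 (Nat.fib_lt_fib_succ hn)
  set P : ℤ := ⌊(i:ℝ) * phi⌋ with hP
  set t : ℝ := Int.fract ((i:ℝ) * phi) with ht
  have htP : (i:ℝ) * phi = P + t := (Int.floor_add_fract _).symm
  have ht0 : 0 ≤ t := Int.fract_nonneg _
  have ht1 : t < 1 := Int.fract_lt_one _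
  -- t ≥ (phi-1)^n
  have hta : (phi-1)^n ≤ t := by
    have := keyA n hn i hi1 hifib P
    rwa [htP, add_sub_cancel_left, abs_of_nonneg ht0] at this
  -- 1 - t ≥ (phi-1)^n
  have htb : (phi-1)^n ≤ 1 - t := by
    have := keyA n hn i hi1 hifib (P + 1)
    rw [htP] at this
    have e : (P:ℝ) + t - ((P+1 : ℤ):ℝ) = t - 1 := by push_cast; ring
    rwa [e, abs_sub_comm, abs_of_nonneg (by linarith)] at this
  -- |t - (2-phi)| ≥ (phi-1)^n
  have htm := keyA n hn (i+1) (by omega) hlt (P + 2)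
  have e2 : ((i+1:ℕ):ℝ) * phi - ((P+2:ℤ):ℝ) = t - (2 - phi) := by
    push_cast; nlinarith [htP]
  rw [e2] at htm
  -- epsilon
  set eps : ℝ := -(1-phi)^(n+1) with heps
  have habs : |eps| = (phi-1)^(n+1) := by rw [heps, abs_neg, abs_psi_pow]
  have hel : -((phi-1)^(n+1)) ≤ eps := neg_abs_le eps |>.trans_eq' (by rw [habs])
  have heu : eps ≤ (phi-1)^(n+1) := le_abs_self eps |>.trans_eq habs
  have hstrict : (phi-1)^(n+1) < (phi-1)^n := by
    have := pow_phi_pos n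
    have : (phi-1)^(n+1) = (phi-1)^n * (phi-1) := pow_succ _ _
    nlinarith [pow_phi_pos n, phi_ub]
  -- fract of shifted value
  have hfr : Int.fract (((Nat.fib (n+1) + i : ℕ):ℝ) * phi) = t + eps := by
    have hid := fib_phi (n+1)
    rw [Int.fract_eq_iff]
    refine ⟨by linarith, by linarith, ⟨P + (Nat.fib (n+2) : ℤ), ?_⟩⟩
    push_cast
    have : ((Nat.fib (n+1+1)):ℝ) = ((Nat.fib (n+2)):ℝ) := by norm_num
    linear_combination htP + hid + this
  rw [hfr]
  rcases le_abs.mp htm with hcase | hcase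
  · constructor <;> intro _ <;> linarith
  · constructor <;> intro _ <;> linarith

lemma f_one : f 1 = 1 := by
  unfold f
  rw [Nat.floor_eq_iff (mul_nonneg (by linarith [phi_lb]) (Nat.cast_nonneg _))]
  push_cast
  constructor <;> nlinarith [phi_lb, phi_ub]

lemma f_two : f 2 = 3 := by
  unfold f
  rw [Nat.floor_eq_iff (mul_nonneg (by linarith [phi_lb]) (Nat.cast_nonneg _))]
  push_cast
  constructor <;> nlinarith [phi_lb, phi_ub]

theorem fib_shift_range (n : ℕ) (hn : 2 ≤ n) (i : ℕ) (hi1 : 1 ≤ i)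
    (hi2 : i ≤ Nat.fib n) :
    (∃ x : ℕ, 1 ≤ x ∧ Nat.fib (n + 1) + i = f x) ↔ (∃ x : ℕ, 1 ≤ x ∧ i = f x) := by
  rcases lt_or_ge (i+1) (Nat.fib (n+1)) with hlt | hge
  · rw [rangeB (Nat.fib (n+1) + i) (by omega), rangeB i hi1]
    exact shiftD n i hn hi1 hi2 hlt
  · -- i + 1 = fib (n+1), forces n ≤ 3
    have hfib : Nat.fib (n+1) = Nat.fib (n-1) + Nat.fib n := by
      rw [show n+1 = (n-1)+2 by omega, Nat.fib_add_two]
      congr 2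
      omega
    have hpos : 1 ≤ Nat.fib (n-1) := Nat.fib_pos.mpr (by omega)
    have hn3 : n ≤ 3 := by
      by_contra h
      have h2 : (2:ℕ) ≤ Nat.fib (n-1) := by
        calc (2:ℕ) = Nat.fib 3 := by decide
          _ ≤ Nat.fib (n-1) := Nat.fib_mono (by omega)
      omega
    interval_cases n
    · -- n = 2
      have e2 : Nat.fib 2 = 1 := by decide
      have e3 : Nat.fib (2+1) = 2 := by decide
      have hi : i = 1 := by omega
      subst hi
      rw [e3]
      constructor
      · intro _; exact ⟨1, le_refl 1, f_one.symm⟩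
      · intro _; exact ⟨2, by norm_num, f_two.symm⟩
    · -- n = 3
      have e3 : Nat.fib 3 = 2 := by decide
      have e4 : Nat.fib (3+1) = 3 := by decide
      have hi : i = 2 := by omega
      subst hi
      rw [e4, show 3 + 2 = 5 from rfl]
      have fr5 : Int.fract (((5:ℕ):ℝ) * phi) = 5*phi - 8 := by
        rw [Int.fract_eq_iff]
        refine ⟨by push_cast; nlinarith [phi_lb], by push_cast; nlinarith [phi_ub],
          ⟨8, by push_cast; ring⟩⟩
      have fr2 : Int.fract (((2:ℕ):ℝ) * phi) = 2*phi - 3 := by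
        rw [Int.fract_eq_iff]
        refine ⟨by push_cast; nlinarith [phi_lb], by push_cast; nlinarith [phi_ub],
          ⟨3, by push_cast; ring⟩⟩
      rw [rangeB 5 (by norm_num), rangeB 2 (by norm_num), fr5, fr2]
      constructor <;> intro h <;> [nlinarith [phi_ub]; nlinarith [phi_ub]]
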